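/- Let S be a constant skew-symmetric k×k real matrix, let H, C : ℝ^k → ℝ be continuously differentiable with S ∇C(u) = 0 for all u ∈ ℝ^k (i.e. C is a Casimir). Let Δt > 0 and suppose u₀, u₁ ∈ ℝ^k satisfy the average vector field relation (u₁ - u₀)/Δt = ∫₀¹ S ∇H((1-ξ)u₀ + ξu₁) dξ. Then C(u₁) = C(u₀). -/

import Mathlib

open Matrix

/-- The AVF method preserves Casimirs: if `S ∇C(u) = 0` for all `u`, then a step
of the average vector field method for `u' = S ∇H(u)` conserves `C`. -/
theorem avf_preserves_casimirs {k : ℕ}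
    (S : Matrix (Fin k) (Fin k) ℝ) (hS : Sᵀ = -S)
    (H C : EuclideanSpace ℝ (Fin k) → ℝ) (hH : ContDiff ℝ 1 H) (hC : ContDiff ℝ 1 C)
    (hCas : ∀ u : EuclideanSpace ℝ (Fin k),
      S.mulVec ((gradient C u : EuclideanSpace ℝ (Fin k))) = 0)
    (Δt : ℝ) (hΔt : 0 < Δt) (u₀ u₁ : EuclideanSpace ℝ (Fin k))
    (havf : Δt⁻¹ • (u₁ - u₀) = ∫ ξ in (0:ℝ)..1,
      ((WithLp.toLp 2 (S.mulVec ((gradient H ((1 - ξ) • u₀ + ξ • u₁) : EuclideanSpace ℝ (Fin k)))) :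
        EuclideanSpace ℝ (Fin k)))) :
    C u₁ = C u₀ := by
  classical
  -- continuity of the gradient of H
  have hgradH : Continuous (fun x : EuclideanSpace ℝ (Fin k) =>
      (gradient H x : EuclideanSpace ℝ (Fin k))) := by
    have h1 : Continuous (fun x : EuclideanSpace ℝ (Fin k) => fderiv ℝ H x) :=
      hH.continuous_fderiv one_ne_zero
    exact (InnerProductSpace.toDual ℝ (EuclideanSpace ℝ (Fin k))).symm.continuous.comp h1
  -- continuity of the integrand
  have hcont : Continuous (fun ξ : ℝ =>
      ((WithLp.toLp 2 (S.mulVec ((gradient H ((1 - ξ) • u₀ + ξ • u₁) : EuclideanSpace ℝ (Fin k)))) :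
        EuclideanSpace ℝ (Fin k)))) := by
    have h2 : Continuous (fun ξ : ℝ =>
        ((1 - ξ) • u₀ + ξ • u₁ : EuclideanSpace ℝ (Fin k))) := by fun_prop
    have h3 : Continuous (fun w : EuclideanSpace ℝ (Fin k) =>
        (WithLp.toLp 2 (S.mulVec (w : Fin k → ℝ)) : EuclideanSpace ℝ (Fin k))) :=
      (PiLp.continuous_toLp 2 _).comp (Continuous.matrix_mulVec continuous_const (PiLp.continuous_ofLp 2 _))
    exact h3.comp (hgradH.comp h2)
  have hInt : IntervalIntegrable (fun ξ : ℝ =>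
      ((WithLp.toLp 2 (S.mulVec ((gradient H ((1 - ξ) • u₀ + ξ • u₁) : EuclideanSpace ℝ (Fin k)))) :
        EuclideanSpace ℝ (Fin k)))) MeasureTheory.volume 0 1 := by
    apply Continuous.intervalIntegrable
    exact hcont
  -- u₁ - u₀ = Δt • integral
  have hdiff : u₁ - u₀ = Δt • ∫ ξ in (0:ℝ)..1,
      ((WithLp.toLp 2 (S.mulVec ((gradient H ((1 - ξ) • u₀ + ξ • u₁) : EuclideanSpace ℝ (Fin k)))) :
        EuclideanSpace ℝ (Fin k))) := by
    rw [← havf, smul_smul, mul_inv_cancel₀ hΔt.ne', one_smul]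
  -- coordinates of the integral
  have hcoord : ∀ i : Fin k, (∫ ξ in (0:ℝ)..1,
      ((WithLp.toLp 2 (S.mulVec ((gradient H ((1 - ξ) • u₀ + ξ • u₁) : EuclideanSpace ℝ (Fin k)))) :
        EuclideanSpace ℝ (Fin k)))) i
      = ∫ ξ in (0:ℝ)..1,
        ((WithLp.toLp 2 (S.mulVec ((gradient H ((1 - ξ) • u₀ + ξ • u₁) : EuclideanSpace ℝ (Fin k)))) :
          EuclideanSpace ℝ (Fin k))) i := by
    intro i
    simpa using
      ((PiLp.proj 2 (𝕜 := ℝ) (fun _ : Fin k => ℝ)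
        i).intervalIntegral_comp_comm hInt).symm
  -- key: gradient C is orthogonal to u₁ - u₀
  have key : ∀ x : EuclideanSpace ℝ (Fin k),
      (inner ℝ (gradient C x) (u₁ - u₀) : ℝ) = 0 := by
    intro x
    set c : EuclideanSpace ℝ (Fin k) := gradient C x with hcdef
    have hc0 : S.mulVec c = 0 := hCas x
    have hkey : ∀ w : Fin k → ℝ, ∑ i, c i * (S.mulVec w) i = 0 := by
      intro w
      have hdp : (c : Fin k → ℝ) ⬝ᵥ S.mulVec w = 0 := by
        rw [dotProduct_mulVec, ← Matrix.mulVec_transpose, hS, Matrix.neg_mulVec, hc0]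
        simp
      simpa [dotProduct] using hdp
    rw [hdiff, inner_smul_right]
    refine mul_eq_zero_of_right _ ?_
    rw [PiLp.inner_apply]
    simp only [RCLike.inner_apply', conj_trivial]
    have step : ∀ i : Fin k, c i * (∫ ξ in (0:ℝ)..1,
        ((WithLp.toLp 2 (S.mulVec ((gradient H ((1 - ξ) • u₀ + ξ • u₁) : EuclideanSpace ℝ (Fin k)))) :
          EuclideanSpace ℝ (Fin k)))) i
        = ∫ ξ in (0:ℝ)..1, c i *
          ((WithLp.toLp 2 (S.mulVec ((gradient H ((1 - ξ) • u₀ + ξ • u₁) : EuclideanSpace ℝ (Fin k)))) :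
            EuclideanSpace ℝ (Fin k))) i := by
      intro i
      rw [hcoord i, ← intervalIntegral.integral_const_mul]
    simp only [step]
    rw [← intervalIntegral.integral_finset_sum]
    · simp [hkey]
    · intro i _
      exact (((PiLp.continuous_apply 2 _ i).comp hcont).intervalIntegrable 0 1).const_mul _
  -- the function g ξ = C (u₀ + ξ • (u₁ - u₀)) has zero derivative
  set g : ℝ → ℝ := fun ξ => C (u₀ + ξ • (u₁ - u₀)) with hg
  have hderiv : ∀ ξ : ℝ, HasDerivAt g 0 ξ := by
    intro ξ
    have hline : HasDerivAt (fun ξ : ℝ =>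
        (u₀ + ξ • (u₁ - u₀) : EuclideanSpace ℝ (Fin k))) (u₁ - u₀) ξ := by
      simpa using ((hasDerivAt_id ξ).smul_const (u₁ - u₀)).const_add u₀
    set x : EuclideanSpace ℝ (Fin k) := u₀ + ξ • (u₁ - u₀)
    have hCx : HasGradientAt C (gradient C x) x :=
      ((hC.differentiable one_ne_zero) x).hasGradientAt
    have hFx : HasFDerivAt C (InnerProductSpace.toDual ℝ (EuclideanSpace ℝ (Fin k))
        (gradient C x)) x := hCx.hasFDerivAt
    have h5 := hFx.comp_hasDerivAt ξ hline
    rw [InnerProductSpace.toDual_apply_apply, key x] at h5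
    exact h5
  have hconst : ∀ a b : ℝ, g a = g b := by
    intro a b
    have h6 : ∀ ξ : ℝ, g ξ = g 0 := fun ξ =>
      is_const_of_deriv_eq_zero (fun t => (hderiv t).differentiableAt)
        (fun t => (hderiv t).deriv) ξ 0
    rw [h6 a, h6 b]
  have h0 : g 0 = C u₀ := by simp [hg]
  have h1 : g 1 = C u₁ := by
    simp only [hg, one_smul]
    congr 1
    abel
  rw [← h0, ← h1, hconst 1 0]
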